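/- arXiv:2106.15929 — 8 statements merged into one kernel-verified Lean document; each statement's English description precedes it below -/
import Mathlib

section
/- Let K₁, K₂ ⊆ ℝⁿ be closed convex cones such that K₁ ∩ K₂ is a linear subspace. Then the set K₁ − K₂ = {k₁ − k₂ : k₁ ∈ K₁, k₂ ∈ K₂} is closed. -/
open Pointwise Set RealInnerProductSpace

namespace ConvexProcessPaper

/-- A convex cone: a nonempty convex set closed under nonnegative scalar multiplication. -/
def IsConvexCone {V : Type*} [AddCommMonoid V] [Module ℝ V] (S : Set V) : Prop :=
  S.Nonempty ∧ Convex ℝ S ∧ ∀ c : ℝ, 0 ≤ c → ∀ x ∈ S, c • x ∈ S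

/-- A set is a linear subspace. -/
def IsLinearSubspace {V : Type*} [AddCommGroup V] [Module ℝ V] (S : Set V) : Prop :=
  ∃ W : Submodule ℝ V, (W : Set V) = S

/-- Set-valued maps from ℝⁿ to ℝⁿ. -/
abbrev SVMap (n : ℕ) := EuclideanSpace ℝ (Fin n) → Set (EuclideanSpace ℝ (Fin n))

variable {n : ℕ}

/-- The graph of a set-valued map. -/
def graph (H : SVMap n) : Set (EuclideanSpace ℝ (Fin n) × EuclideanSpace ℝ (Fin n)) :=
  {p | p.2 ∈ H p.1}

/-- A convex process: a set-valued map whose graph is a convex cone. -/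
def IsConvexProcess (H : SVMap n) : Prop := IsConvexCone (graph H)

/-- The domain of a set-valued map. -/
def dom (H : SVMap n) : Set (EuclideanSpace ℝ (Fin n)) := {x | (H x).Nonempty}

/-- The image of a set-valued map. -/
def im (H : SVMap n) : Set (EuclideanSpace ℝ (Fin n)) := {y | ∃ x, y ∈ H x}

/-- The inverse of a set-valued map: gr(H⁻¹) = {(y,x) : (x,y) ∈ gr(H)}. -/
def invMap (H : SVMap n) : SVMap n := fun y => {x | y ∈ H x}

/-- The image of a set under a set-valued map: H(S) = ⋃_{x ∈ S} H(x). -/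
def imSet (H : SVMap n) (S : Set (EuclideanSpace ℝ (Fin n))) :
    Set (EuclideanSpace ℝ (Fin n)) := ⋃ x ∈ S, H x

/-- The reachable set: R(H) = ⋃_{ℓ ≥ 0} H^ℓ({0}). -/
def reach (H : SVMap n) : Set (EuclideanSpace ℝ (Fin n)) := ⋃ ℓ : ℕ, (imSet H)^[ℓ] {0}

/-- The null-controllable set: N(H) = R(H⁻¹). -/
def nullc (H : SVMap n) : Set (EuclideanSpace ℝ (Fin n)) := reach (invMap H)

/-- The feasible set: states from which an infinite trajectory emanates. -/
def feas (H : SVMap n) : Set (EuclideanSpace ℝ (Fin n)) :=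
  {ξ | ∃ x : ℕ → EuclideanSpace ℝ (Fin n), x 0 = ξ ∧ ∀ k, x (k + 1) ∈ H (x k)}

/-- The minimal linear process L₋: gr(L₋) = lin(gr(H)) = gr(H) ∩ (−gr(H)). -/
def Lminus (H : SVMap n) : SVMap n := fun x => {y | y ∈ H x ∧ -y ∈ H (-x)}

/-- The maximal linear process L₊: gr(L₊) = Lin(gr(H)) = gr(H) − gr(H). -/
def Lplus (H : SVMap n) : SVMap n :=
  fun x => {y | ∃ x₁ y₁ x₂ y₂, y₁ ∈ H x₁ ∧ y₂ ∈ H x₂ ∧ x = x₁ - x₂ ∧ y = y₁ - y₂}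

/-- The negative dual process: p ∈ H⁻(q) ⇔ ⟨p,x⟩ ≥ ⟨q,y⟩ for all (x,y) ∈ gr(H). -/
def negDual (H : SVMap n) : SVMap n :=
  fun q => {p | ∀ x y, y ∈ H x → ⟪q, y⟫ ≤ ⟪p, x⟫}

/-- The positive dual process: p ∈ H⁺(q) ⇔ ⟨p,x⟩ ≤ ⟨q,y⟩ for all (x,y) ∈ gr(H). -/
def posDual (H : SVMap n) : SVMap n :=
  fun q => {p | ∀ x y, y ∈ H x → ⟪p, x⟫ ≤ ⟪q, y⟫}

/-- The negative polar cone of a set. -/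
def negPolar (C : Set (EuclideanSpace ℝ (Fin n))) : Set (EuclideanSpace ℝ (Fin n)) :=
  {y | ∀ x ∈ C, ⟪x, y⟫ ≤ 0}

/-- The positive polar cone of a set. -/
def posPolar (C : Set (EuclideanSpace ℝ (Fin n))) : Set (EuclideanSpace ℝ (Fin n)) :=
  {y | ∀ x ∈ C, 0 ≤ ⟪x, y⟫}

/-- C is weakly H invariant: H(x) ∩ C ≠ ∅ for all x ∈ C. -/
def WeaklyInv (H : SVMap n) (C : Set (EuclideanSpace ℝ (Fin n))) : Prop :=
  ∀ x ∈ C, (H x ∩ C).Nonempty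

/-- C is strongly H invariant: H(x) ⊆ C for all x ∈ C. -/
def StronglyInv (H : SVMap n) (C : Set (EuclideanSpace ℝ (Fin n))) : Prop :=
  ∀ x ∈ C, H x ⊆ C

/-- H is reachable: every feasible state is reachable. -/
def IsReachable (H : SVMap n) : Prop := feas H ⊆ reach H

/-- H is null-controllable: every feasible state is null-controllable. -/
def IsNullControllable (H : SVMap n) : Prop := feas H ⊆ nullc H

lemma cone_add {V : Type*} [AddCommGroup V] [Module ℝ V] {S : Set V}
    (h : IsConvexCone S) {x y : V} (hx : x ∈ S) (hy : y ∈ S) : x + y ∈ S := by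
  have hm : (1/2 : ℝ) • x + (1/2 : ℝ) • y ∈ S :=
    h.2.1 hx hy (by norm_num) (by norm_num) (by norm_num)
  have := h.2.2 2 (by norm_num) _ hm
  have h2 : (2:ℝ) • ((1/2 : ℝ) • x + (1/2 : ℝ) • y) = x + y := by
    rw [smul_add, smul_smul, smul_smul]; norm_num
  rwa [h2] at this

/-- if K₁ ∩ K₂ is a subspace then K₁ − K₂ is closed. -/
theorem sub_of_closed_cones_closed {n : ℕ} (K₁ K₂ : Set (EuclideanSpace ℝ (Fin n)))
    (h₁ : IsConvexCone K₁) (h₂ : IsConvexCone K₂)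
    (hc₁ : IsClosed K₁) (hc₂ : IsClosed K₂)
    (hsub : IsLinearSubspace (K₁ ∩ K₂)) :
    IsClosed (K₁ - K₂) := by
  obtain ⟨W, hW⟩ := hsub
  apply IsSeqClosed.isClosed
  intro z zl hz hzl
  -- choose representatives with first component in Wᗮ
  have hrep : ∀ m, ∃ x ∈ K₁ ∩ (Wᗮ : Set (EuclideanSpace ℝ (Fin n))), ∃ y ∈ K₂, x - y = z m := by
    intro m
    obtain ⟨a, ha, b, hb, hab⟩ := Set.mem_sub.1 (hz m)
    refine ⟨a - (Submodule.orthogonalProjectionOnto W a : EuclideanSpace ℝ (Fin n)),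
      ⟨?_, Submodule.sub_starProjection_mem_orthogonal (K := W) a⟩,
      b - (Submodule.orthogonalProjectionOnto W a : EuclideanSpace ℝ (Fin n)), ?_, by
        rw [sub_sub_sub_cancel_right]; exact hab⟩
    · have hq : -(Submodule.orthogonalProjectionOnto W a : EuclideanSpace ℝ (Fin n)) ∈ K₁ := by
        have : -(Submodule.orthogonalProjectionOnto W a : EuclideanSpace ℝ (Fin n)) ∈ (W : Set _) :=
          neg_mem (Submodule.orthogonalProjectionOnto W a).2
        rw [hW] at this; exact this.1
      have := cone_add h₁ ha hq
      rwa [← sub_eq_add_neg] at this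
    · have hq : -(Submodule.orthogonalProjectionOnto W a : EuclideanSpace ℝ (Fin n)) ∈ K₂ := by
        have : -(Submodule.orthogonalProjectionOnto W a : EuclideanSpace ℝ (Fin n)) ∈ (W : Set _) :=
          neg_mem (Submodule.orthogonalProjectionOnto W a).2
        rw [hW] at this; exact this.2
      have := cone_add h₂ hb hq
      rwa [← sub_eq_add_neg] at this
  choose x hx y hy hxy using hrep
  have hyx : ∀ m, y m = x m - z m := fun m => by
    have := hxy m; rw [← this]; abel
  -- z is bounded
  obtain ⟨M, hM⟩ := isBounded_iff_forall_norm_le.1 (Metric.isBounded_range_of_tendsto z hzl)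
  have hMz : ∀ m, ‖z m‖ ≤ M := fun m => hM _ ⟨m, rfl⟩
  by_cases hbdd : ∃ C, ∀ m, ‖x m‖ ≤ C
  · -- bounded case: extract convergent subsequence
    obtain ⟨C, hC⟩ := hbdd
    have hxball : ∀ m, x m ∈ Metric.closedBall (0 : EuclideanSpace ℝ (Fin n)) C := by
      intro m; simpa [Metric.mem_closedBall, dist_eq_norm] using hC m
    obtain ⟨a, -, φ, hφ, hconv⟩ :=
      tendsto_subseq_of_bounded Metric.isBounded_closedBall hxball
    have haK : a ∈ K₁ := hc₁.mem_of_tendsto hconv (Filter.Eventually.of_forall fun m => (hx _).1)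
    have hyconv : Filter.Tendsto (fun m => y (φ m)) Filter.atTop (nhds (a - zl)) := by
      have : ∀ m, y (φ m) = x (φ m) - z (φ m) := fun m => hyx _
      simp_rw [this]
      exact hconv.sub (hzl.comp hφ.tendsto_atTop)
    have hbK : a - zl ∈ K₂ :=
      hc₂.mem_of_tendsto hyconv (Filter.Eventually.of_forall fun m => hy _)
    exact Set.mem_sub.2 ⟨a, haK, a - zl, hbK, by abel⟩
  · -- unbounded case: contradiction
    exfalso
    push_neg at hbdd
    have hsel : ∀ m : ℕ, ∃ k, (m : ℝ) + 1 ≤ ‖x k‖ := by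
      intro m
      obtain ⟨k, hk⟩ := hbdd ((m : ℝ) + 1)
      exact ⟨k, hk.le⟩
    choose k hk using hsel
    have hkpos : ∀ m, 0 < ‖x (k m)‖ := fun m =>
      lt_of_lt_of_le (by positivity) (hk m)
    set u : ℕ → EuclideanSpace ℝ (Fin n) := fun m => ‖x (k m)‖⁻¹ • x (k m) with hu
    have husphere : ∀ m, u m ∈ Metric.sphere (0 : EuclideanSpace ℝ (Fin n)) 1 := by
      intro m
      simp only [hu, mem_sphere_iff_norm, sub_zero, norm_smul, norm_inv, norm_norm]
      exact inv_mul_cancel₀ (hkpos m).ne'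
    obtain ⟨a, ha, ψ, hψ, hconv⟩ :=
      tendsto_subseq_of_bounded
        (Metric.isBounded_closedBall (x := (0:EuclideanSpace ℝ (Fin n))) (r := 1))
        (fun m => Metric.sphere_subset_closedBall (husphere m))
    have hnorma : ‖a‖ = 1 := by
      have : Filter.Tendsto (fun m => ‖u (ψ m)‖) Filter.atTop (nhds ‖a‖) := hconv.norm
      have h1 : ∀ m, ‖u (ψ m)‖ = 1 := fun m => by
        simpa [mem_sphere_iff_norm] using husphere (ψ m)
      simp_rw [h1] at this
      exact tendsto_nhds_unique this tendsto_const_nhds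
    -- a ∈ K₁
    have haK₁ : a ∈ K₁ := by
      refine hc₁.mem_of_tendsto hconv (Filter.Eventually.of_forall fun m => ?_)
      exact h₁.2.2 _ (inv_nonneg.2 (norm_nonneg _)) _ (hx _).1
    -- a ∈ Wᗮ
    have haWp : a ∈ Wᗮ := by
      have : IsClosed (Wᗮ : Set (EuclideanSpace ℝ (Fin n))) := Submodule.closed_of_finiteDimensional _
      refine this.mem_of_tendsto hconv (Filter.Eventually.of_forall fun m => ?_)
      exact Submodule.smul_mem _ _ (hx _).2
    -- a ∈ K₂ : since ‖x k m‖⁻¹ • y (k m) → a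
    have hscaled : Filter.Tendsto (fun m => ‖x (k (ψ m))‖⁻¹ • z (k (ψ m))) Filter.atTop (nhds 0) := by
      have hb : ∀ m : ℕ, ‖‖x (k (ψ m))‖⁻¹ • z (k (ψ m))‖ ≤ M * ((m : ℝ) + 1)⁻¹ := by
        intro m
        rw [norm_smul, norm_inv, norm_norm]
        have hmm : (m : ℝ) ≤ (ψ m : ℝ) := Nat.cast_le.2 hψ.le_apply
        have h1 : (m : ℝ) + 1 ≤ ‖x (k (ψ m))‖ := by
          have := hk (ψ m); linarith
        have h2 : ‖x (k (ψ m))‖⁻¹ ≤ ((m:ℝ)+1)⁻¹ :=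
          inv_anti₀ (by positivity) h1
        calc ‖x (k (ψ m))‖⁻¹ * ‖z (k (ψ m))‖ ≤ ((m:ℝ)+1)⁻¹ * M := by
              apply mul_le_mul h2 (hMz _) (norm_nonneg _) (by positivity)
          _ = M * ((m:ℝ)+1)⁻¹ := by ring
      have ht : Filter.Tendsto (fun m : ℕ => M * ((m : ℝ) + 1)⁻¹) Filter.atTop (nhds 0) := by
        have : Filter.Tendsto (fun m : ℕ => ((m : ℝ) + 1)⁻¹) Filter.atTop (nhds 0) := by
          apply Filter.Tendsto.inv_tendsto_atTop
          exact Filter.tendsto_atTop_add_const_right _ 1 tendsto_natCast_atTop_atTop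
        simpa using this.const_mul M
      exact squeeze_zero_norm hb ht
    have hyconv : Filter.Tendsto (fun m => ‖x (k (ψ m))‖⁻¹ • y (k (ψ m))) Filter.atTop (nhds a) := by
      have heq : ∀ m, ‖x (k (ψ m))‖⁻¹ • y (k (ψ m)) = u (ψ m) - ‖x (k (ψ m))‖⁻¹ • z (k (ψ m)) := by
        intro m
        rw [hyx, smul_sub]
      simp_rw [heq]
      simpa using hconv.sub hscaled
    have haK₂ : a ∈ K₂ := by
      refine hc₂.mem_of_tendsto hyconv (Filter.Eventually.of_forall fun m => ?_)
      exact h₂.2.2 _ (inv_nonneg.2 (norm_nonneg _)) _ (hy _)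
    -- a ∈ W ∩ Wᗮ = 0
    have haW : a ∈ W := by rw [← SetLike.mem_coe, hW]; exact ⟨haK₁, haK₂⟩
    have : a = 0 := by
      have := (Submodule.mem_orthogonal W a).1 haWp a haW
      exact inner_self_eq_zero.1 this
    rw [this, norm_zero] at hnorma
    norm_num at hnorma

end ConvexProcessPaper
end

section
/- Let (C_ℓ)_{ℓ≥1} be a sequence of convex cones in ℝⁿ that is nested, i.e. C_ℓ ⊆ C_{ℓ+1} for all ℓ, and satisfies ⋃_{ℓ=1}^∞ C_ℓ = ℝⁿ. Then there exists an integer q such that C_q = ℝⁿ. -/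
open Pointwise Set RealInnerProductSpace

namespace ConvexProcessPaper

variable {n : ℕ}

/-- a nested sequence of convex cones covering ℝⁿ stabilizes at ℝⁿ. -/
theorem nested_cones_cover {n : ℕ} (C : ℕ → Set (EuclideanSpace ℝ (Fin n)))
    (hcone : ∀ ℓ, IsConvexCone (C ℓ))
    (hnested : ∀ ℓ, C ℓ ⊆ C (ℓ + 1))
    (hunion : ⋃ ℓ, C ℓ = Set.univ) :
    ∃ q, C q = Set.univ := by
  have hmono : Monotone C := monotone_nat_of_le_succ hnested
  have hmem : ∀ v : EuclideanSpace ℝ (Fin n), ∃ ℓ, v ∈ C ℓ := by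
    intro v
    have : v ∈ ⋃ ℓ, C ℓ := hunion ▸ Set.mem_univ v
    simpa using this
  choose f hf using hmem
  set e : Fin n → EuclideanSpace ℝ (Fin n) := fun i => EuclideanSpace.single i (1:ℝ) with he
  set q := Finset.univ.sup (fun i : Fin n => max (f (e i)) (f (-e i))) with hq
  refine ⟨q, ?_⟩
  have hsmul := (hcone q).2.2
  have h0 : (0 : EuclideanSpace ℝ (Fin n)) ∈ C q := by
    obtain ⟨x₀, hx₀⟩ := (hcone q).1
    simpa using hsmul 0 le_rfl x₀ hx₀
  have hadd : ∀ x ∈ C q, ∀ y ∈ C q, x + y ∈ C q := by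
    intro x hx y hy
    have hmid : (1/2 : ℝ) • x + (1/2 : ℝ) • y ∈ C q :=
      (hcone q).2.1 hx hy (by norm_num) (by norm_num) (by norm_num)
    have := hsmul 2 (by norm_num) _ hmid
    simpa [smul_add, smul_smul] using this
  let S : AddSubmonoid (EuclideanSpace ℝ (Fin n)) :=
    { carrier := C q
      add_mem' := fun hx hy => hadd _ hx _ hy
      zero_mem' := h0 }
  have hterm : ∀ i : Fin n, ∀ c : ℝ, c • e i ∈ C q := by
    intro i c
    rcases le_or_gt 0 c with hc | hc
    · exact hsmul c hc _ (hmono (le_trans (le_max_left _ _)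
        (Finset.le_sup (f := fun i : Fin n => max (f (e i)) (f (-e i))) (Finset.mem_univ i))) (hf (e i)))
    · have : c • e i = (-c) • (-e i) := by simp
      rw [this]
      exact hsmul (-c) (by linarith) _ (hmono (le_trans (le_max_right _ _)
        (Finset.le_sup (f := fun i : Fin n => max (f (e i)) (f (-e i))) (Finset.mem_univ i))) (hf (-e i)))
  ext x
  simp only [Set.mem_univ, iff_true]
  have hx : x = ∑ i : Fin n, x i • e i := by
    have := (EuclideanSpace.basisFun (Fin n) ℝ).sum_repr x
    simpa [EuclideanSpace.basisFun_repr, he, EuclideanSpace.basisFun_apply] using this.symm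
  rw [hx]
  exact sum_mem (S := S) (fun i _ => hterm i (x i))

end ConvexProcessPaper
end

section
/- Let H : ℝⁿ ⇉ ℝⁿ be a convex process. If the convex cone W is weakly H invariant and the convex cone S is strongly H invariant, then W ∩ S is weakly H invariant and S − W is strongly H invariant. -/
open Pointwise Set RealInnerProductSpace

namespace ConvexProcessPaper

variable {n : ℕ}

lemma graph_add {n : ℕ} (H : SVMap n) (hH : IsConvexProcess H)
    {x₁ x₂ y₁ y₂ : EuclideanSpace ℝ (Fin n)} (h1 : y₁ ∈ H x₁) (h2 : y₂ ∈ H x₂) :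
    y₁ + y₂ ∈ H (x₁ + x₂) := by
  obtain ⟨-, hconv, hsmul⟩ := hH
  have hmid : ((1:ℝ)/2) • ((x₁, y₁) : _ × _) + ((1:ℝ)/2) • (x₂, y₂) ∈ graph H :=
    hconv h1 h2 (by norm_num) (by norm_num) (by norm_num)
  have h := hsmul 2 (by norm_num) _ hmid
  have : (2:ℝ) • (((1:ℝ)/2) • ((x₁, y₁) : _ × _) + ((1:ℝ)/2) • (x₂, y₂))
      = (x₁ + x₂, y₁ + y₂) := by
    simp [Prod.ext_iff, smul_add, smul_smul]
  rwa [this] at h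

/-- W ∩ S is weakly invariant and S − W is strongly invariant. -/
theorem inter_weak_sub_strong {n : ℕ} (H : SVMap n) (hH : IsConvexProcess H)
    (W S : Set (EuclideanSpace ℝ (Fin n))) (hWc : IsConvexCone W) (hSc : IsConvexCone S)
    (hW : WeaklyInv H W) (hS : StronglyInv H S) :
    WeaklyInv H (W ∩ S) ∧ StronglyInv H (S - W) := by
  constructor
  · rintro x ⟨hxW, hxS⟩
    obtain ⟨y, hyH, hyW⟩ := hW x hxW
    exact ⟨y, hyH, hyW, hS x hxS hyH⟩
  · rintro z ⟨s, hs, w, hw, rfl⟩ v hv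
    obtain ⟨y, hyH, hyW⟩ := hW w hw
    have hsum : v + y ∈ H s := by
      have := graph_add H hH hv hyH
      rwa [sub_add_cancel] at this
    exact ⟨v + y, hS s hs hsum, y, hyW, add_sub_cancel_right v y⟩

end ConvexProcessPaper
end

section
/- Let H : ℝⁿ ⇉ ℝⁿ be a convex process and let R = R(H) be its reachable set. If dom(H) − R is a linear subspace, then R − R = R₊, where R₊ = R(L₊) is the reachable set of the maximal linear process L₊ associated with H. -/
open Pointwise Set RealInnerProductSpace

namespace ConvexProcessPaper

variable {n : ℕ}

lemma cp_zero {H : SVMap n} (hH : IsConvexProcess H) : (0 : EuclideanSpace ℝ (Fin n)) ∈ H 0 := by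
  obtain ⟨p, hp⟩ := hH.1
  have h := hH.2.2 0 le_rfl p hp
  simpa [graph] using h

lemma cp_add {H : SVMap n} (hH : IsConvexProcess H) {x u y v : EuclideanSpace ℝ (Fin n)}
    (h1 : y ∈ H x) (h2 : v ∈ H u) : y + v ∈ H (x + u) := by
  have hp : ((x, y) : _ × _) ∈ graph H := h1
  have hq : ((u, v) : _ × _) ∈ graph H := h2
  have hm := hH.2.1 hp hq (by norm_num : (0:ℝ) ≤ 1/2) (by norm_num : (0:ℝ) ≤ 1/2) (by norm_num)
  have h2m := hH.2.2 2 (by norm_num) _ hm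
  have heq : (2:ℝ) • ((1/2:ℝ) • ((x, y) : _ × _) + (1/2:ℝ) • ((u, v) : _ × _))
      = (x + u, y + v) := by
    rw [Prod.ext_iff]
    refine ⟨?_, ?_⟩ <;> · show (2:ℝ) • ((1/2:ℝ) • _ + (1/2:ℝ) • _) = _; module
  rw [heq] at h2m
  exact h2m

lemma mem_imSet {H : SVMap n} {S : Set (EuclideanSpace ℝ (Fin n))}
    {y : EuclideanSpace ℝ (Fin n)} : y ∈ imSet H S ↔ ∃ x ∈ S, y ∈ H x := by
  simp [imSet]

lemma imSet_mono {H : SVMap n} {S T : Set (EuclideanSpace ℝ (Fin n))} (h : S ⊆ T) :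
    imSet H S ⊆ imSet H T := by
  intro y hy
  obtain ⟨x, hx, hyx⟩ := mem_imSet.1 hy
  exact mem_imSet.2 ⟨x, h hx, hyx⟩

/-- Iterates contain 0 and are closed under addition. -/
lemma iter_zero_add {H : SVMap n} (hH : IsConvexProcess H) (ℓ : ℕ) :
    (0 : EuclideanSpace ℝ (Fin n)) ∈ (imSet H)^[ℓ] {0} ∧
    ∀ a ∈ (imSet H)^[ℓ] {0}, ∀ b ∈ (imSet H)^[ℓ] {0}, a + b ∈ (imSet H)^[ℓ] {0} := by
  induction ℓ with
  | zero =>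
      refine ⟨rfl, ?_⟩
      intro a ha b hb
      simp only [Function.iterate_zero, id_eq, Set.mem_singleton_iff] at ha hb ⊢
      simp [ha, hb]
  | succ ℓ ih =>
      rw [Function.iterate_succ_apply']
      refine ⟨mem_imSet.2 ⟨0, ih.1, cp_zero hH⟩, ?_⟩
      intro a ha b hb
      obtain ⟨x, hx, hax⟩ := mem_imSet.1 ha
      obtain ⟨u, hu, hbu⟩ := mem_imSet.1 hb
      exact mem_imSet.2 ⟨x + u, ih.2 x hx u hu, cp_add hH hax hbu⟩

lemma iter_mono_set {H : SVMap n} (ℓ : ℕ) {S T : Set (EuclideanSpace ℝ (Fin n))}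
    (h : S ⊆ T) : (imSet H)^[ℓ] S ⊆ (imSet H)^[ℓ] T := by
  induction ℓ generalizing S T with
  | zero => simp only [Function.iterate_zero, id_eq]; exact h
  | succ ℓ ih =>
      rw [Function.iterate_succ_apply, Function.iterate_succ_apply]
      exact ih (imSet_mono h)

lemma iter_mono {H : SVMap n} (hH : IsConvexProcess H) (ℓ : ℕ) :
    (imSet H)^[ℓ] {0} ⊆ (imSet H)^[ℓ+1] {0} := by
  rw [Function.iterate_succ_apply]
  apply iter_mono_set
  intro a ha
  simp only [Set.mem_singleton_iff] at ha
  subst ha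
  exact mem_imSet.2 ⟨0, rfl, cp_zero hH⟩

lemma iter_mono_le {H : SVMap n} (hH : IsConvexProcess H) {k ℓ : ℕ} (h : k ≤ ℓ) :
    (imSet H)^[k] {0} ⊆ (imSet H)^[ℓ] {0} := by
  induction ℓ with
  | zero => simp [Nat.le_zero.1 h]
  | succ ℓ ih =>
      rcases Nat.lt_or_ge k (ℓ+1) with hlt | hge
      · exact (ih (Nat.lt_succ_iff.1 hlt)).trans (iter_mono hH ℓ)
      · have : k = ℓ + 1 := le_antisymm h hge
        subst this; exact subset_rfl

lemma mem_reach_iff {H : SVMap n} {x : EuclideanSpace ℝ (Fin n)} :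
    x ∈ reach H ↔ ∃ ℓ, x ∈ (imSet H)^[ℓ] {0} := by
  simp [reach]

lemma reach_add {H : SVMap n} (hH : IsConvexProcess H) {a b : EuclideanSpace ℝ (Fin n)}
    (ha : a ∈ reach H) (hb : b ∈ reach H) : a + b ∈ reach H := by
  obtain ⟨k, hk⟩ := mem_reach_iff.1 ha
  obtain ⟨ℓ, hℓ⟩ := mem_reach_iff.1 hb
  refine mem_reach_iff.2 ⟨max k ℓ, (iter_zero_add hH _).2 a ?_ b ?_⟩
  · exact iter_mono_le hH (le_max_left k ℓ) hk
  · exact iter_mono_le hH (le_max_right k ℓ) hℓ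

lemma reach_inv {H : SVMap n} {x y : EuclideanSpace ℝ (Fin n)}
    (hx : x ∈ reach H) (hy : y ∈ H x) : y ∈ reach H := by
  obtain ⟨ℓ, hℓ⟩ := mem_reach_iff.1 hx
  refine mem_reach_iff.2 ⟨ℓ + 1, ?_⟩
  rw [Function.iterate_succ_apply']
  exact mem_imSet.2 ⟨x, hℓ, hy⟩

lemma zero_mem_reach {H : SVMap n} : (0 : EuclideanSpace ℝ (Fin n)) ∈ reach H :=
  mem_reach_iff.2 ⟨0, rfl⟩

/-- if dom(H) − R(H) is a subspace then R(H) − R(H) = R₊. -/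
theorem reach_sub_reach_eq_Rplus {n : ℕ} (H : SVMap n) (hH : IsConvexProcess H)
    (hsub : IsLinearSubspace (dom H - reach H)) :
    reach H - reach H = reach (Lplus H) := by
  obtain ⟨W, hW⟩ := hsub
  apply Set.Subset.antisymm
  · -- easy inclusion: R − R ⊆ R₊
    have key : ∀ ℓ : ℕ, ∀ a ∈ (imSet H)^[ℓ] {0}, ∀ b ∈ (imSet H)^[ℓ] {0},
        a - b ∈ (imSet (Lplus H))^[ℓ] {0} := by
      intro ℓ
      induction ℓ with
      | zero =>
          intro a ha b hb
          simp only [Function.iterate_zero, id_eq, Set.mem_singleton_iff] at ha hb ⊢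
          simp [ha, hb]
      | succ ℓ ih =>
          intro a ha b hb
          rw [Function.iterate_succ_apply'] at ha hb ⊢
          obtain ⟨x, hx, hax⟩ := mem_imSet.1 ha
          obtain ⟨u, hu, hbu⟩ := mem_imSet.1 hb
          refine mem_imSet.2 ⟨x - u, ih x hx u hu, ?_⟩
          exact ⟨x, a, u, b, hax, hbu, rfl, rfl⟩
    rintro v hv
    rw [Set.mem_sub] at hv
    obtain ⟨a, ha, b, hb, rfl⟩ := hv
    obtain ⟨k, hk⟩ := mem_reach_iff.1 ha
    obtain ⟨ℓ, hℓ⟩ := mem_reach_iff.1 hb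
    refine mem_reach_iff.2 ⟨max k ℓ, key _ a ?_ b ?_⟩
    · exact iter_mono_le hH (le_max_left k ℓ) hk
    · exact iter_mono_le hH (le_max_right k ℓ) hℓ
  · -- hard inclusion: R₊ ⊆ R − R
    -- one-step invariance of R − R under L₊
    have step : ∀ u ∈ reach H - reach H, ∀ v ∈ Lplus H u, v ∈ reach H - reach H := by
      intro u hu v hv
      obtain ⟨x₁, y₁, x₂, y₂, hy₁, hy₂, hux, rfl⟩ := hv
      rw [Set.mem_sub] at hu
      obtain ⟨r₁, hr₁, r₂, hr₂, hur⟩ := hu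
      -- x₁ - r₁ ∈ dom H − R, and W is a subspace, so its negation is some d − r
      have hw : x₁ - r₁ ∈ dom H - reach H :=
        Set.sub_mem_sub ⟨y₁, hy₁⟩ hr₁
      rw [← hW] at hw
      have hw' : -(x₁ - r₁) ∈ (W : Set _) := W.neg_mem hw
      rw [hW, Set.mem_sub] at hw'
      obtain ⟨d, hd, r, hr, hdr⟩ := hw'
      obtain ⟨z, hz⟩ := hd
      -- x₁ + d = r₁ + r and x₂ + d = r₂ + r
      have he1 : x₁ + d = r₁ + r := by
        have h : d = -(x₁ - r₁) + r := by rw [← hdr]; abel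
        rw [h]; abel
      have hx12 : x₁ - x₂ = r₁ - r₂ := by rw [hux] at hur; exact hur.symm
      have he2 : x₂ + d = r₂ + r := by
        have h : x₂ + d = (x₁ + d) - (x₁ - x₂) := by abel
        rw [h, he1, hx12]; abel
      have h1 : y₁ + z ∈ H (r₁ + r) := he1 ▸ cp_add hH hy₁ hz
      have h2 : y₂ + z ∈ H (r₂ + r) := he2 ▸ cp_add hH hy₂ hz
      have hR1 : y₁ + z ∈ reach H := reach_inv (reach_add hH hr₁ hr) h1
      have hR2 : y₂ + z ∈ reach H := reach_inv (reach_add hH hr₂ hr) h2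
      rw [Set.mem_sub]
      exact ⟨y₁ + z, hR1, y₂ + z, hR2, by abel⟩
    -- now induct over L₊-iterates
    have key : ∀ ℓ : ℕ, (imSet (Lplus H))^[ℓ] {0} ⊆ reach H - reach H := by
      intro ℓ
      induction ℓ with
      | zero =>
          intro a ha
          simp only [Function.iterate_zero, id_eq, Set.mem_singleton_iff] at ha
          subst ha
          exact Set.mem_sub.2 ⟨0, zero_mem_reach, 0, zero_mem_reach, by simp⟩
      | succ ℓ ih =>
          intro v hv
          rw [Function.iterate_succ_apply'] at hv
          obtain ⟨u, hu, hvu⟩ := mem_imSet.1 hv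
          exact step u (ih hu) v hvu
    intro v hv
    obtain ⟨ℓ, hℓ⟩ := mem_reach_iff.1 hv
    exact key ℓ hℓ

end ConvexProcessPaper
end

section
/- Let H : ℝⁿ ⇉ ℝⁿ be a convex process and K ⊆ ℝⁿ a convex cone such that dom(H) − K is a linear subspace. Then (H(K))⁻ = (H⁻)⁻¹(K⁻). -/
open Pointwise Set RealInnerProductSpace

namespace ConvexProcessPaper

variable {n : ℕ}

private lemma IsConvexCone.zero_mem' {V : Type*} [AddCommMonoid V] [Module ℝ V] {S : Set V}
    (h : IsConvexCone S) : (0 : V) ∈ S := by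
  obtain ⟨⟨s, hs⟩, -, hcone⟩ := h
  simpa using hcone 0 le_rfl s hs

private lemma cone_sep {n : ℕ} (D : Set (EuclideanSpace ℝ (Fin n) × ℝ))
    (hD : IsConvexCone D)
    (hspan : Submodule.span ℝ D = ⊤)
    (hproj : ∀ u : EuclideanSpace ℝ (Fin n), ∃ r : ℝ, (u, r) ∈ D)
    (h01 : ((0 : EuclideanSpace ℝ (Fin n)), (1:ℝ)) ∉ D) :
    ∃ p : EuclideanSpace ℝ (Fin n), ∀ u r, (u, r) ∈ D → r ≤ ⟪p, u⟫ := by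
  classical
  obtain ⟨hne, hconv, hcone⟩ := hD
  have h0D : (0 : EuclideanSpace ℝ (Fin n) × ℝ) ∈ D := IsConvexCone.zero_mem' ⟨hne, hconv, hcone⟩
  -- affine span is top
  have htop : affineSpan ℝ D = ⊤ := by
    rw [AffineSubspace.affineSpan_eq_top_iff_vectorSpan_eq_top_of_nonempty ℝ
      (EuclideanSpace ℝ (Fin n) × ℝ) (EuclideanSpace ℝ (Fin n) × ℝ) hne]
    rw [vectorSpan_def]
    rw [eq_top_iff, ← hspan]
    apply Submodule.span_mono
    intro d hd
    exact ⟨d, hd, 0, h0D, by simp⟩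
  have hint : (interior D).Nonempty := hconv.interior_nonempty_iff_affineSpan_eq_top.2 htop
  obtain ⟨a, ha⟩ := hint
  have h01i : ((0 : EuclideanSpace ℝ (Fin n)), (1:ℝ)) ∉ interior D :=
    fun h => h01 (interior_subset h)
  obtain ⟨f, hf⟩ := geometric_hahn_banach_open_point hconv.interior isOpen_interior h01i
  set c : ℝ := f ((0 : EuclideanSpace ℝ (Fin n)), (1:ℝ)) with hc
  -- f ≤ c on D
  have hfD : ∀ d ∈ D, f d ≤ c := by
    intro d hd
    by_contra hgt
    push_neg at hgt
    have hfa : f a < c := hf a ha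
    have hM : 0 < f d - f a := by linarith
    set t : ℝ := (f d - c) / (2 * (f d - f a)) with ht
    have ht0 : 0 < t := div_pos (by linarith) (by linarith)
    have ht1 : t ≤ 1 := by
      rw [ht, div_le_one (by linarith)]
      linarith
    have hmem : d + t • (a - d) ∈ interior D :=
      hconv.add_smul_sub_mem_interior hd ha ⟨ht0, ht1⟩
    have := hf _ hmem
    have hval : f (d + t • (a - d)) = f d + t * (f a - f d) := by
      simp [map_add, map_smul, map_sub, mul_sub]
    rw [hval] at this
    have htM : t * (f d - f a) = (f d - c) / 2 := by
      rw [ht]; field_simp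
    nlinarith
  -- f ≤ 0 on D
  have hc0 : 0 ≤ c := by simpa using hfD 0 h0D
  have hf0 : ∀ d ∈ D, f d ≤ 0 := by
    intro d hd
    by_contra hgt
    push_neg at hgt
    have hmem : ((c + 1) / f d) • d ∈ D := hcone _ (by positivity) d hd
    have := hfD _ hmem
    rw [map_smul] at this
    rw [smul_eq_mul, div_mul_cancel₀ _ (ne_of_gt hgt)] at this
    linarith
  -- decompose f
  have hsplit : ∀ (u : EuclideanSpace ℝ (Fin n)) (r : ℝ),
      f (u, r) = f (u, (0:ℝ)) + r * c := by
    intro u r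
    have : ((u, r) : EuclideanSpace ℝ (Fin n) × ℝ)
        = (u, (0:ℝ)) + r • ((0 : EuclideanSpace ℝ (Fin n)), (1:ℝ)) := by
      simp [Prod.ext_iff]
    rw [this, map_add, map_smul, smul_eq_mul, hc]
  -- c > 0
  have hcpos : 0 < c := by
    rcases lt_or_eq_of_le hc0 with h | h
    · exact h
    · exfalso
      have hphi : ∀ u : EuclideanSpace ℝ (Fin n), f (u, (0:ℝ)) ≤ 0 := by
        intro u
        obtain ⟨r, hr⟩ := hproj u
        have h2 := hf0 _ hr
        rw [hsplit, ← h] at h2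
        linarith
      have hphi0 : ∀ u : EuclideanSpace ℝ (Fin n), f (u, (0:ℝ)) = 0 := by
        intro u
        have h1 := hphi u
        have h2 := hphi (-u)
        have h3 : f ((-u : EuclideanSpace ℝ (Fin n)), (0:ℝ)) = -f (u, (0:ℝ)) := by
          have h4 : ((-u : EuclideanSpace ℝ (Fin n)), (0:ℝ))
              = -((u : EuclideanSpace ℝ (Fin n)), (0:ℝ)) := by simp [Prod.ext_iff]
          rw [h4, map_neg]
        rw [h3] at h2
        linarith
      have hfa0 : f a = 0 := by
        have h5 : f a = f (a.1, a.2) := by simp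
        rw [h5, hsplit, hphi0, ← h]
        ring
      have h6 := hf a ha
      rw [hfa0] at h6
      exact absurd h6 (by rw [← h]; exact lt_irrefl 0)
  -- build p via Riesz
  set g : EuclideanSpace ℝ (Fin n) →L[ℝ] ℝ :=
    c⁻¹ • (-(f.comp (ContinuousLinearMap.inl ℝ (EuclideanSpace ℝ (Fin n)) ℝ))) with hg
  refine ⟨(InnerProductSpace.toDual ℝ (EuclideanSpace ℝ (Fin n))).symm g, ?_⟩
  intro u r hur
  rw [InnerProductSpace.toDual_symm_apply]
  have hgu : g u = c⁻¹ * (-(f (u, (0:ℝ)))) := by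
    simp [hg]
  rw [hgu]
  have h1 : f (u, r) ≤ 0 := hf0 _ hur
  rw [hsplit] at h1
  rw [inv_mul_eq_div, le_div_iff₀ hcpos]
  linarith


/-- (H(K))⁻ = (H⁻)⁻¹(K⁻) when dom(H) − K is a subspace. -/
theorem image_negPolar {n : ℕ} (H : SVMap n) (hH : IsConvexProcess H)
    (K : Set (EuclideanSpace ℝ (Fin n))) (hK : IsConvexCone K)
    (hsub : IsLinearSubspace (dom H - K)) :
    negPolar (imSet H K) = imSet (invMap (negDual H)) (negPolar K) := by

  classical
  obtain ⟨Wsub, hWsub⟩ := hsub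
  have hH0 : (0 : EuclideanSpace ℝ (Fin n)) ∈ H 0 := hH.zero_mem'
  have hK0 : (0 : EuclideanSpace ℝ (Fin n)) ∈ K := hK.zero_mem'
  ext q
  constructor
  · -- hard direction
    intro hq
    -- hq : ∀ y ∈ imSet H K, ⟪y, q⟫ ≤ 0
    set D : Set (EuclideanSpace ℝ (Fin n) × ℝ) :=
      {d | ∃ x y k w, y ∈ H x ∧ k ∈ K ∧ w ∈ Wsubᗮ ∧ d.1 = x - k + w ∧ d.2 ≤ ⟪q, y⟫} with hDdef
    have hmemD : ∀ x y k w, y ∈ H x → k ∈ K → w ∈ Wsubᗮ →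
        ∀ r : ℝ, r ≤ ⟪q, y⟫ → ((x - k + w, r) : EuclideanSpace ℝ (Fin n) × ℝ) ∈ D := by
      intro x y k w hy hk hw r hr
      exact ⟨x, y, k, w, hy, hk, hw, rfl, hr⟩
    have h0D : (0 : EuclideanSpace ℝ (Fin n) × ℝ) ∈ D :=
      ⟨0, 0, 0, 0, hH0, hK0, Submodule.zero_mem _, by simp, by simp⟩
    have hDconv : Convex ℝ D := by
      rintro d₁ ⟨x₁, y₁, k₁, w₁, hy₁, hk₁, hw₁, he₁, hr₁⟩
        d₂ ⟨x₂, y₂, k₂, w₂, hy₂, hk₂, hw₂, he₂, hr₂⟩ a b ha hb hab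
      refine ⟨a • x₁ + b • x₂, a • y₁ + b • y₂, a • k₁ + b • k₂, a • w₁ + b • w₂, ?_, ?_, ?_, ?_, ?_⟩
      · have hg := hH.2.1 (show ((x₁, y₁) : _ × _) ∈ graph H from hy₁)
          (show ((x₂, y₂) : _ × _) ∈ graph H from hy₂) ha hb hab
        simpa [graph, Prod.smul_mk, Prod.mk_add_mk] using hg
      · exact hK.2.1 hk₁ hk₂ ha hb hab
      · exact Submodule.add_mem _ (Submodule.smul_mem _ _ hw₁) (Submodule.smul_mem _ _ hw₂)
      · show a • d₁.1 + b • d₂.1 = _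
        rw [he₁, he₂]
        module
      · show a • d₁.2 + b • d₂.2 ≤ ⟪q, a • y₁ + b • y₂⟫
        rw [inner_add_right, real_inner_smul_right, real_inner_smul_right,
          smul_eq_mul, smul_eq_mul]
        exact add_le_add (mul_le_mul_of_nonneg_left hr₁ ha) (mul_le_mul_of_nonneg_left hr₂ hb)
    have hDsmul : ∀ c : ℝ, 0 ≤ c → ∀ d ∈ D, c • d ∈ D := by
      rintro c hc d ⟨x, y, k, w, hy, hk, hw, he, hr⟩
      refine ⟨c • x, c • y, c • k, c • w, ?_, hK.2.2 c hc k hk, Submodule.smul_mem _ _ hw, ?_, ?_⟩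
      · have hg := hH.2.2 c hc (x, y) hy
        simpa [graph, Prod.smul_mk] using hg
      · show c • d.1 = _
        rw [he]; module
      · show c • d.2 ≤ ⟪q, c • y⟫
        rw [real_inner_smul_right, smul_eq_mul]
        exact mul_le_mul_of_nonneg_left hr hc
    have hDcone : IsConvexCone D := ⟨⟨0, h0D⟩, hDconv, hDsmul⟩
    -- projection
    have hproj : ∀ v : EuclideanSpace ℝ (Fin n), ∃ r : ℝ, (v, r) ∈ D := by
      intro v
      have hsup : Wsub ⊔ Wsubᗮ = ⊤ := Submodule.sup_orthogonal_of_hasOrthogonalProjection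
      have hv : v ∈ Wsub ⊔ Wsubᗮ := by rw [hsup]; trivial
      obtain ⟨u, hu, w, hw, huw⟩ := Submodule.mem_sup.1 hv
      have hu' : u ∈ dom H - K := by rw [← hWsub]; exact hu
      obtain ⟨x, hx, k, hk, hxk⟩ := Set.mem_sub.1 hu'
      obtain ⟨y, hy⟩ := hx
      refine ⟨⟪q, y⟫, x, y, k, w, hy, hk, hw, ?_, le_rfl⟩
      show v = x - k + w
      rw [← huw, ← hxk]
    -- (0, 1) not in D
    have h01D : ((0 : EuclideanSpace ℝ (Fin n)), (1:ℝ)) ∉ D := by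
      rintro ⟨x, y, k, w, hy, hk, hw, he, hr⟩
      have hxk : x - k ∈ (Wsub : Set (EuclideanSpace ℝ (Fin n))) := by
        rw [hWsub]
        exact Set.sub_mem_sub ⟨y, hy⟩ hk
      have h0 : x - k + w = (0 : EuclideanSpace ℝ (Fin n)) := he.symm
      have hwW : w ∈ Wsub := by
        have hwe : w = -(x - k) := by linear_combination (norm := module) h0
        rw [hwe]
        exact Submodule.neg_mem _ hxk
      have hw0 : w = 0 := by
        have := (Submodule.mem_orthogonal _ _).1 hw w hwW
        exact inner_self_eq_zero.1 this
      have hxkeq : x = k := by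
        rw [hw0, add_zero] at h0
        rwa [sub_eq_zero] at h0
      have hyim : y ∈ imSet H K := Set.mem_biUnion hk (hxkeq ▸ hy)
      have := hq y hyim
      have h1 : (1 : ℝ) ≤ ⟪q, y⟫ := hr
      rw [real_inner_comm] at h1
      linarith
    -- span is top
    have hspan : Submodule.span ℝ D = ⊤ := by
      rw [eq_top_iff]
      rintro ⟨v1, v2⟩ -
      obtain ⟨r, hur⟩ := hproj v1
      have hneg : ((0 : EuclideanSpace ℝ (Fin n)), (-1:ℝ)) ∈ D :=
        ⟨0, 0, 0, 0, hH0, hK0, Submodule.zero_mem _, by simp, by simp⟩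
      have h01span : ((0 : EuclideanSpace ℝ (Fin n)), (1:ℝ)) ∈ Submodule.span ℝ D := by
        have hmem := Submodule.subset_span (R := ℝ) hneg
        have := Submodule.neg_mem _ hmem
        simpa [Prod.ext_iff] using this
      have heq : ((v1, v2) : EuclideanSpace ℝ (Fin n) × ℝ)
          = (v1, r) + (v2 - r) • ((0 : EuclideanSpace ℝ (Fin n)), (1:ℝ)) := by
        simp [Prod.ext_iff]
      rw [heq]
      exact Submodule.add_mem _ (Submodule.subset_span hur)
        (Submodule.smul_mem _ _ h01span)
    obtain ⟨p, hp⟩ := cone_sep D hDcone hspan hproj h01D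
    -- conclude
    refine Set.mem_biUnion (show p ∈ negPolar K from ?_) (show p ∈ negDual H q from ?_)
    · intro k hk
      have hmem : ((-k, 0) : EuclideanSpace ℝ (Fin n) × ℝ) ∈ D :=
        ⟨0, 0, k, 0, hH0, hk, Submodule.zero_mem _, by simp, by simp⟩
      have := hp (-k) 0 hmem
      rw [inner_neg_right] at this
      rw [real_inner_comm]
      linarith
    · intro x y hy
      exact hp x ⟪q, y⟫ ⟨x, y, 0, 0, hy, hK0, Submodule.zero_mem _, by simp, le_rfl⟩
  · -- easy direction
    intro hq
    obtain ⟨p, hpK, hpq⟩ := Set.mem_iUnion₂.1 hq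
    -- hpq : q ∈ invMap (negDual H) p, i.e. p ∈ negDual H q
    intro y hy
    obtain ⟨x, hx, hyx⟩ := Set.mem_iUnion₂.1 hy
    have h1 : ⟪q, y⟫ ≤ ⟪p, x⟫ := hpq x y hyx
    have h2 : ⟪x, p⟫ ≤ 0 := hpK x hx
    rw [real_inner_comm]
    rw [real_inner_comm] at h2
    linarith

end ConvexProcessPaper
end

section
/- Let H : ℝⁿ ⇉ ℝⁿ be a convex process and K ⊆ ℝⁿ a convex cone such that K − dom(H) is a linear subspace. If K is closed and the negative polar cone K⁻ is weakly H⁻ invariant, then K is strongly H invariant. -/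
open Pointwise Set RealInnerProductSpace

namespace ConvexProcessPaper

variable {n : ℕ}

/-- if K is closed and K⁻ is weakly H⁻ invariant then K is strongly H invariant. -/
theorem weakInv_dual_to_strongInv {n : ℕ} (H : SVMap n) (hH : IsConvexProcess H)
    (K : Set (EuclideanSpace ℝ (Fin n))) (hK : IsConvexCone K)
    (hsub : IsLinearSubspace (K - dom H))
    (hclosed : IsClosed K)
    (hweak : WeaklyInv (negDual H) (negPolar K)) :
    StronglyInv H K := by
  obtain ⟨hne, hconv, hsmul⟩ := hK
  -- build a mathlib ConvexCone from K
  set C : ConvexCone ℝ (EuclideanSpace ℝ (Fin n)) :=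
    { carrier := K
      smul_mem' := fun c hc x hx => hsmul c hc.le x hx
      add_mem' := by
        intro a ha b hb
        have h2 : a + b = (2 : ℝ) • ((1/2 : ℝ) • a + (1/2 : ℝ) • b) := by
          rw [smul_add, smul_smul, smul_smul]; norm_num
        rw [h2]
        exact hsmul 2 (by norm_num)
          _ (hconv ha hb (by norm_num) (by norm_num) (by norm_num)) } with hC
  intro x hx y hy
  by_contra hyK
  obtain ⟨q, hq1, hq2⟩ :=
    ProperCone.hyperplane_separation' (x₀ := y)
      (C := { carrier := K
              add_mem' := fun ha hb => C.add_mem ha hb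
              zero_mem' := by
                obtain ⟨z, hz⟩ := hne
                simpa using hsmul 0 le_rfl z hz
              smul_mem' := fun c x hx => hsmul c c.2 x hx
              isClosed' := hclosed }) hyK
  have hqK : -q ∈ negPolar K := by
    intro k hk
    rw [inner_neg_right]
    linarith [hq1 k hk]
  obtain ⟨p, hpdual, hpK⟩ := hweak (-q) hqK
  have h1 : ⟪-q, y⟫ ≤ ⟪p, x⟫ := hpdual x y hy
  have h2 : ⟪p, x⟫ ≤ 0 := by rw [real_inner_comm]; exact hpK x hx
  rw [inner_neg_left] at h1
  linarith [real_inner_comm q y]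

end ConvexProcessPaper
end

section
/- Let H : ℝⁿ ⇉ ℝⁿ be a closed convex process and K ≠ {0} a closed convex cone in ℝⁿ. Suppose that K does not contain a line, H(0) ∩ K = {0}, and K is weakly H invariant. Then K contains an eigenvector of H corresponding to a nonnegative eigenvalue, i.e. there exist ξ ∈ K with ξ ≠ 0 and λ ≥ 0 such that λξ ∈ H(ξ). -/
open Pointwise Set RealInnerProductSpace

namespace ConvexProcessPaper

variable {n : ℕ}

lemma combo_mem {V : Type*} [AddCommGroup V] [Module ℝ V] {S : Set V} (h0 : (0:V) ∈ S)
    (hadd : ∀ ⦃x⦄, x ∈ S → ∀ ⦃y⦄, y ∈ S → x + y ∈ S)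
    (hsmul : ∀ c : ℝ, 0 ≤ c → ∀ ⦃x⦄, x ∈ S → c • x ∈ S)
    (T : Finset V) (f : V → ℝ) (hf : ∀ v ∈ T, 0 ≤ f v) (hTS : ∀ v ∈ T, v ∈ S) :
    (∑ v ∈ T, f v • v) ∈ S := by
  classical
  induction T using Finset.induction_on with
  | empty => simpa using h0
  | insert _ _ hx ih =>
      rename_i a T'
      rw [Finset.sum_insert hx]
      exact hadd (hsmul _ (hf _ (Finset.mem_insert_self _ _)) (hTS _ (Finset.mem_insert_self _ _)))
        (ih (fun v hv => hf v (Finset.mem_insert_of_mem hv))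
            (fun v hv => hTS v (Finset.mem_insert_of_mem hv)))

lemma orderUnit {V : Type*} [NormedAddCommGroup V] [InnerProductSpace ℝ V]
    [FiniteDimensional ℝ V] {S : Set V} (h0 : (0:V) ∈ S)
    (hadd : ∀ ⦃x⦄, x ∈ S → ∀ ⦃y⦄, y ∈ S → x + y ∈ S)
    (hsmul : ∀ c : ℝ, 0 ≤ c → ∀ ⦃x⦄, x ∈ S → c • x ∈ S) :
    ∃ u ∈ S, ∀ d ∈ Submodule.span ℝ S, ∃ δ : ℝ, 0 < δ ∧ u + δ • d ∈ S := by
  classical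
  obtain ⟨b, hbS, hbspan, hbli⟩ := exists_linearIndependent ℝ S
  have hbfin : b.Finite := hbli.setFinite
  set T : Finset V := hbfin.toFinset with hT
  have hTS : ∀ v ∈ T, v ∈ S := by
    intro v hv
    exact hbS (hbfin.mem_toFinset.mp hv)
  refine ⟨∑ v ∈ T, v, ?_, ?_⟩
  · have := combo_mem h0 hadd hsmul T (fun _ => (1:ℝ)) (fun v _ => zero_le_one) hTS
    simpa using this
  · intro d hd
    have hd' : d ∈ Submodule.span ℝ (↑T : Set V) := by
      rwa [hT, Set.Finite.coe_toFinset, hbspan]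
    obtain ⟨f, -, hf⟩ := Submodule.mem_span_finset.mp hd'
    set A : ℝ := ∑ v ∈ T, |f v| with hA
    have hA0 : 0 ≤ A := Finset.sum_nonneg fun v _ => abs_nonneg _
    refine ⟨(1 + A)⁻¹, by positivity, ?_⟩
    have hcoeff : ∀ v ∈ T, 0 ≤ 1 + (1 + A)⁻¹ * f v := by
      intro v hv
      have h1 : |f v| ≤ A := Finset.single_le_sum (fun w _ => abs_nonneg (f w)) hv
      have h2 : (1 + A)⁻¹ * |f v| ≤ (1 + A)⁻¹ * A :=
        mul_le_mul_of_nonneg_left h1 (by positivity)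
      have h3 : (1 + A)⁻¹ * A ≤ 1 := by
        rw [inv_mul_le_iff₀ (by positivity)]; linarith
      have h4 : -((1+A)⁻¹ * f v) ≤ (1+A)⁻¹ * |f v| := by
        rw [← mul_neg]
        exact mul_le_mul_of_nonneg_left (neg_le_abs _) (by positivity)
      linarith
    have heq : (∑ v ∈ T, v) + (1 + A)⁻¹ • d = ∑ v ∈ T, (1 + (1 + A)⁻¹ * f v) • v := by
      rw [← hf, Finset.smul_sum, ← Finset.sum_add_distrib]
      congr 1
      ext v
      rw [add_smul, one_smul, smul_smul]
    rw [heq]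
    exact combo_mem h0 hadd hsmul T _ hcoeff hTS


-- basic closure facts
lemma cone_zero_mem {V : Type*} [AddCommGroup V] [Module ℝ V] {S : Set V}
    (hS : IsConvexCone S) : (0:V) ∈ S := by
  obtain ⟨⟨x, hx⟩, _, hsmul⟩ := hS
  simpa using hsmul 0 le_rfl x hx

lemma cone_add_mem {V : Type*} [AddCommGroup V] [Module ℝ V] {S : Set V}
    (hS : IsConvexCone S) : ∀ ⦃x⦄, x ∈ S → ∀ ⦃y⦄, y ∈ S → x + y ∈ S := by
  intro x hx y hy
  obtain ⟨_, hconv, hsmul⟩ := hS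
  have h := hconv hx hy (by norm_num : (0:ℝ) ≤ 1/2) (by norm_num : (0:ℝ) ≤ 1/2) (by norm_num)
  have h2 := hsmul 2 (by norm_num) _ h
  have : (2:ℝ) • ((1/2 : ℝ) • x + (1/2 : ℝ) • y) = x + y := by
    rw [smul_add, smul_smul, smul_smul]; norm_num
  rwa [this] at h2

/-- strictly positive functional on a pointed closed cone -/
lemma exists_pos_functional {n : ℕ} {K : Set (EuclideanSpace ℝ (Fin n))}
    (hK : IsConvexCone K) (hKclosed : IsClosed K)
    (hline : ¬ ∃ x : EuclideanSpace ℝ (Fin n), x ≠ 0 ∧ x ∈ K ∧ -x ∈ K) :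
    ∃ e : EuclideanSpace ℝ (Fin n),
      (∀ x ∈ K, 0 ≤ ⟪e, x⟫) ∧ (∀ x ∈ K, x ≠ 0 → 0 < ⟪e, x⟫) := by
  classical
  -- dual cone
  set D : Set (EuclideanSpace ℝ (Fin n)) := {y | ∀ x ∈ K, 0 ≤ ⟪x, y⟫} with hD
  have hD0 : (0:EuclideanSpace ℝ (Fin n)) ∈ D := fun x _ => by simp [hD]
  have hDadd : ∀ ⦃a⦄, a ∈ D → ∀ ⦃b⦄, b ∈ D → a + b ∈ D := by
    intro a ha b hb x hx
    rw [inner_add_right]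
    exact add_nonneg (ha x hx) (hb x hx)
  have hDsmul : ∀ c : ℝ, 0 ≤ c → ∀ ⦃a⦄, a ∈ D → c • a ∈ D := by
    intro c hc a ha x hx
    rw [real_inner_smul_right]
    exact mul_nonneg hc (ha x hx)
  -- D spans everything
  have hspan : Submodule.span ℝ D = ⊤ := by
    by_contra hne
    have : (Submodule.span ℝ D)ᗮ ≠ ⊥ := fun h =>
      hne (Submodule.orthogonal_eq_bot_iff.mp h)
    obtain ⟨d, hd, hd0⟩ := Submodule.exists_mem_ne_zero_of_ne_bot this
    -- d ⟂ D, so d ∈ bipolar = K and -d ∈ K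
    have hdmem : ∀ y ∈ D, ⟪y, d⟫ = 0 := fun y hy =>
      (Submodule.mem_orthogonal _ _).mp hd y (Submodule.subset_span hy)
    have hmem : ∀ z : EuclideanSpace ℝ (Fin n), (∀ y ∈ D, 0 ≤ ⟪y, z⟫) → z ∈ K := by
      intro z hz
      by_contra hzK
      obtain ⟨f, u, hfz, hfK⟩ := geometric_hahn_banach_point_closed hK.2.1 hKclosed hzK
      have hu : u < 0 := by simpa using hfK 0 (cone_zero_mem hK)
      have hfpos : ∀ x ∈ K, 0 ≤ f x := by
        intro x hx
        by_contra hneg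
        push_neg at hneg
        have h1 := hfK ((u / f x) • x)
          (hK.2.2 _ (div_nonneg_of_nonpos (le_of_lt hu) (le_of_lt hneg)) x hx)
        rw [map_smul, smul_eq_mul, div_mul_cancel₀ _ (ne_of_lt hneg)] at h1
        exact lt_irrefl _ h1
      set y := (InnerProductSpace.toDual ℝ (EuclideanSpace ℝ (Fin n))).symm f with hy
      have hyx : ∀ x, ⟪y, x⟫ = f x := fun x => by
        rw [hy, InnerProductSpace.toDual_symm_apply]
      have hyD : y ∈ D := fun x hx => by rw [real_inner_comm, hyx]; exact hfpos x hx
      have := hz y hyD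
      rw [hyx] at this
      linarith
    have hdK : d ∈ K := hmem d fun y hy => le_of_eq (hdmem y hy).symm
    have hdK' : -d ∈ K := hmem (-d) fun y hy => by
      rw [inner_neg_right, hdmem y hy, neg_zero]
    exact hline ⟨d, hd0, hdK, hdK'⟩
  -- order unit of D
  obtain ⟨e, heD, heord⟩ := orderUnit hD0 hDadd hDsmul
  refine ⟨e, fun x hx => by rw [real_inner_comm]; exact heD x hx, ?_⟩
  intro x hx hx0
  obtain ⟨δ, hδ, hmem⟩ := heord (-x) (by rw [hspan]; trivial)
  have h1 : 0 ≤ ⟪x, e + δ • (-x)⟫ := hmem x hx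
  rw [inner_add_right, inner_smul_right, inner_neg_right, real_inner_self_eq_norm_sq] at h1
  have hxn : 0 < ‖x‖ := norm_pos_iff.mpr hx0
  have h2 : 0 < δ * ‖x‖^2 := by positivity
  have : ⟪e, x⟫ = ⟪x, e⟫ := real_inner_comm _ _
  nlinarith [h1]

set_option maxHeartbeats 2000000 in
/-- a weakly invariant pointed closed cone contains an eigenvector of H
corresponding to a nonnegative eigenvalue. -/
theorem eigenvector_in_cone {n : ℕ} (H : SVMap n) (hH : IsConvexProcess H)
    (hHclosed : IsClosed (graph H))
    (K : Set (EuclideanSpace ℝ (Fin n))) (hK : IsConvexCone K) (hKclosed : IsClosed K)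
    (hKne : K ≠ {0})
    (hline : ¬ ∃ x : EuclideanSpace ℝ (Fin n), x ≠ 0 ∧ x ∈ K ∧ -x ∈ K)
    (hH0 : H 0 ∩ K = {0})
    (hweak : WeaklyInv H K) :
    ∃ ξ ∈ K, ξ ≠ 0 ∧ ∃ lam : ℝ, 0 ≤ lam ∧ lam • ξ ∈ H ξ := by
  classical
  -- basic cone facts
  have hKzero : (0 : EuclideanSpace ℝ (Fin n)) ∈ K := cone_zero_mem hK
  have hKadd := cone_add_mem hK
  have hKsmul : ∀ c : ℝ, 0 ≤ c → ∀ ⦃x⦄, x ∈ K → c • x ∈ K :=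
    fun c hc x hx => hK.2.2 c hc x hx
  -- a nonzero element of K
  obtain ⟨k₀, hk₀K, hk₀0⟩ : ∃ k, k ∈ K ∧ k ≠ 0 := by
    by_contra hcon
    push_neg at hcon
    apply hKne
    ext x
    constructor
    · intro hx
      by_cases hx0 : x = 0
      · simp [hx0]
      · exact absurd (hcon x hx) (by simpa using hx0)
    · intro hx
      simp only [Set.mem_singleton_iff] at hx
      rw [hx]; exact hKzero
  -- graph closure facts
  have hGsmul : ∀ (t : ℝ), 0 ≤ t → ∀ {x y : EuclideanSpace ℝ (Fin n)},
      y ∈ H x → t • y ∈ H (t • x) := by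
    intro t ht x y hy
    exact hH.2.2 t ht (x, y) hy
  have hGadd : ∀ {x₁ y₁ x₂ y₂ : EuclideanSpace ℝ (Fin n)},
      y₁ ∈ H x₁ → y₂ ∈ H x₂ → y₁ + y₂ ∈ H (x₁ + x₂) := by
    intro x₁ y₁ x₂ y₂ h1 h2
    exact cone_add_mem hH (show (x₁, y₁) ∈ graph H from h1) (show (x₂, y₂) ∈ graph H from h2)
  -- closed-graph limit helpers
  have hHlim : ∀ (a b : ℕ → EuclideanSpace ℝ (Fin n)) (a₀ b₀ : EuclideanSpace ℝ (Fin n)),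
      (∀ j, b j ∈ H (a j)) → Filter.Tendsto a Filter.atTop (nhds a₀) →
      Filter.Tendsto b Filter.atTop (nhds b₀) → b₀ ∈ H a₀ := by
    intro a b a₀ b₀ hmem ha hb
    have hp : Filter.Tendsto (fun j => (a j, b j)) Filter.atTop (nhds (a₀, b₀)) :=
      ha.prodMk_nhds hb
    exact hHclosed.mem_of_tendsto hp (Filter.Eventually.of_forall hmem)
  have hKlim : ∀ (a : ℕ → EuclideanSpace ℝ (Fin n)) (a₀ : EuclideanSpace ℝ (Fin n)),
      (∀ j, a j ∈ K) → Filter.Tendsto a Filter.atTop (nhds a₀) → a₀ ∈ K := by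
    intro a a₀ hmem ha
    exact hKclosed.mem_of_tendsto ha (Filter.Eventually.of_forall hmem)
  -- positive functional
  obtain ⟨e, he0, hepos⟩ := exists_pos_functional hK hKclosed hline
  have hecont : Continuous fun x : EuclideanSpace ℝ (Fin n) => ⟪e, x⟫ :=
    Continuous.inner continuous_const continuous_id
  -- uniform lower bound on the base
  obtain ⟨v, hv0, hvle⟩ : ∃ v : ℝ, 0 < v ∧ ∀ x ∈ K, v * ‖x‖ ≤ ⟪e, x⟫ := by
    have hScomp : IsCompact (K ∩ Metric.sphere (0 : EuclideanSpace ℝ (Fin n)) 1) :=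
      (isCompact_sphere 0 1).inter_left hKclosed
    have hSne : (K ∩ Metric.sphere (0 : EuclideanSpace ℝ (Fin n)) 1).Nonempty := by
      refine ⟨‖k₀‖⁻¹ • k₀, hKsmul _ (by positivity) hk₀K, ?_⟩
      rw [mem_sphere_zero_iff_norm, norm_smul, norm_inv, norm_norm]
      exact inv_mul_cancel₀ (norm_ne_zero_iff.mpr hk₀0)
    obtain ⟨xm, hxm, hmin⟩ := hScomp.exists_isMinOn hSne hecont.continuousOn
    have hxm0 : xm ≠ 0 := by
      intro h
      have := hxm.2
      rw [h, mem_sphere_zero_iff_norm, norm_zero] at this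
      norm_num at this
    refine ⟨⟪e, xm⟫, hepos xm hxm.1 hxm0, ?_⟩
    intro x hx
    by_cases hx0 : x = 0
    · simp [hx0]
    · have hxn : 0 < ‖x‖ := norm_pos_iff.mpr hx0
      have hmem : ‖x‖⁻¹ • x ∈ K ∩ Metric.sphere (0 : EuclideanSpace ℝ (Fin n)) 1 := by
        refine ⟨hKsmul _ (by positivity) hx, ?_⟩
        rw [mem_sphere_zero_iff_norm, norm_smul, norm_inv, norm_norm]
        exact inv_mul_cancel₀ (norm_ne_zero_iff.mpr hx0)
      have h1 := hmin hmem
      simp only [Set.mem_setOf_eq] at h1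
      rw [real_inner_smul_right] at h1
      calc ⟪e, xm⟫ * ‖x‖ ≤ (‖x‖⁻¹ * ⟪e, x⟫) * ‖x‖ := by
            exact mul_le_mul_of_nonneg_right h1 (le_of_lt hxn)
        _ = ⟪e, x⟫ := by field_simp
  -- order unit of K
  obtain ⟨u, huK, huord⟩ := orderUnit hKzero hKadd hKsmul
  -- uniform bound on images
  obtain ⟨M, hMb⟩ : ∃ M : ℝ, ∀ x g : EuclideanSpace ℝ (Fin n),
      x ∈ K → ⟪e, x⟫ ≤ 1 → g ∈ H x → g ∈ K → ‖g‖ ≤ M := by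
    by_contra hcon
    push_neg at hcon
    have hpick : ∀ j : ℕ, ∃ x g : EuclideanSpace ℝ (Fin n),
        (x ∈ K ∧ ⟪e, x⟫ ≤ 1 ∧ g ∈ H x ∧ g ∈ K) ∧ ((j : ℝ) + 1) < ‖g‖ := by
      intro j
      obtain ⟨x, g, h1, h2, h3, h4, h5⟩ := hcon ((j : ℝ) + 1)
      exact ⟨x, g, ⟨h1, h2, h3, h4⟩, h5⟩
    choose x g hxg hbig using hpick
    have hgpos : ∀ j, 0 < ‖g j‖ := fun j => lt_of_le_of_lt (by positivity) (hbig j)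
    set w : ℕ → EuclideanSpace ℝ (Fin n) := fun j => ‖g j‖⁻¹ • g j with hw
    set a : ℕ → EuclideanSpace ℝ (Fin n) := fun j => ‖g j‖⁻¹ • x j with ha
    have hwsph : ∀ j, w j ∈ Metric.sphere (0 : EuclideanSpace ℝ (Fin n)) 1 := by
      intro j
      rw [mem_sphere_zero_iff_norm, hw, norm_smul, norm_inv, norm_norm]
      exact inv_mul_cancel₀ (ne_of_gt (hgpos j))
    have hwH : ∀ j, w j ∈ H (a j) := fun j =>
      hGsmul _ (inv_nonneg.mpr (norm_nonneg _)) (hxg j).2.2.1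
    have hwK : ∀ j, w j ∈ K := fun j =>
      hKsmul _ (inv_nonneg.mpr (norm_nonneg _)) (hxg j).2.2.2
    have hxb : ∀ j, ‖x j‖ ≤ v⁻¹ := by
      intro j
      have h1 := hvle (x j) (hxg j).1
      have h2 := (hxg j).2.1
      have h3 : v * ‖x j‖ ≤ 1 := le_trans h1 h2
      calc ‖x j‖ = v⁻¹ * (v * ‖x j‖) := by rw [inv_mul_cancel_left₀ (ne_of_gt hv0)]
        _ ≤ v⁻¹ * 1 := mul_le_mul_of_nonneg_left h3 (by positivity)
        _ = v⁻¹ := mul_one _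
    have hanorm : ∀ j, ‖a j‖ ≤ v⁻¹ * (1 / ((j:ℝ) + 1)) := by
      intro j
      rw [ha, norm_smul, norm_inv, norm_norm]
      have h1 : ‖g j‖⁻¹ ≤ 1 / ((j:ℝ)+1) := by
        rw [one_div]
        exact inv_anti₀ (by positivity) (le_of_lt (hbig j))
      calc ‖g j‖⁻¹ * ‖x j‖ ≤ (1/((j:ℝ)+1)) * v⁻¹ :=
            mul_le_mul h1 (hxb j) (norm_nonneg _) (by positivity)
        _ = v⁻¹ * (1/((j:ℝ)+1)) := by ring
    have hatend : Filter.Tendsto a Filter.atTop (nhds 0) := by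
      apply squeeze_zero_norm hanorm
      have := tendsto_one_div_add_atTop_nhds_zero_nat (𝕜 := ℝ)
      simpa using this.const_mul v⁻¹
    obtain ⟨ybar, hysph, φ, hφ, hyconv⟩ := (isCompact_sphere (0 : EuclideanSpace ℝ (Fin n)) 1).tendsto_subseq hwsph
    have haconv : Filter.Tendsto (a ∘ φ) Filter.atTop (nhds 0) :=
      hatend.comp hφ.tendsto_atTop
    have hyH : ybar ∈ H 0 := hHlim (a ∘ φ) (w ∘ φ) 0 ybar (fun j => hwH (φ j)) haconv hyconv
    have hyK : ybar ∈ K := hKlim (w ∘ φ) ybar (fun j => hwK (φ j)) hyconv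
    have : ybar = 0 := by
      have : ybar ∈ H 0 ∩ K := ⟨hyH, hyK⟩
      rw [hH0] at this
      exact this
    rw [mem_sphere_zero_iff_norm, this, norm_zero] at hysph
    norm_num at hysph
  -- the bound for eigenvalues
  set Lam : ℝ := ‖e‖ * M + ‖e‖ * ‖u‖ with hLam
  -- key step: approximate eigenvectors
  have key : ∀ ε : ℝ, 0 < ε → ε ≤ 1 → ∃ x : EuclideanSpace ℝ (Fin n), ∃ lam : ℝ,
      x ∈ K ∧ ⟪e, x⟫ = 1 ∧ 0 ≤ lam ∧ lam ≤ Lam ∧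
      lam • x - ε • u ∈ H x ∧ lam • x - ε • u ∈ K := by
    intro ε hε hε1
    set S : Set ℝ := {lam | ∃ x g : EuclideanSpace ℝ (Fin n), x ∈ K ∧ ⟪e, x⟫ = 1 ∧
      g ∈ H x ∧ g ∈ K ∧ g + ε • u - lam • x ∈ K} with hS
    -- a base point
    have hek₀ : 0 < ⟪e, k₀⟫ := hepos k₀ hk₀K hk₀0
    set x₀ : EuclideanSpace ℝ (Fin n) := ⟪e, k₀⟫⁻¹ • k₀ with hx₀
    have hx₀K : x₀ ∈ K := hKsmul _ (by positivity) hk₀K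
    have hx₀e : ⟪e, x₀⟫ = 1 := by
      rw [hx₀, real_inner_smul_right, inv_mul_cancel₀ (ne_of_gt hek₀)]
    obtain ⟨g₀, hg₀H, hg₀K⟩ := hweak x₀ hx₀K
    have h0S : (0 : ℝ) ∈ S := by
      refine ⟨x₀, g₀, hx₀K, hx₀e, hg₀H, hg₀K, ?_⟩
      rw [zero_smul, sub_zero]
      exact hKadd hg₀K (hKsmul _ (le_of_lt hε) huK)
    have hSbdd : ∀ lam ∈ S, lam ≤ Lam := by
      rintro lam ⟨x, g, hxK, hxe, hgH, hgK, hzK⟩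
      have h1 : 0 ≤ ⟪e, g + ε • u - lam • x⟫ := he0 _ hzK
      rw [inner_sub_right, inner_add_right, real_inner_smul_right, real_inner_smul_right,
        hxe, mul_one] at h1
      have h2 : ⟪e, g⟫ ≤ ‖e‖ * M := by
        calc ⟪e, g⟫ ≤ ‖e‖ * ‖g‖ := real_inner_le_norm e g
          _ ≤ ‖e‖ * M := mul_le_mul_of_nonneg_left
              (hMb x g hxK (le_of_eq hxe) hgH hgK) (norm_nonneg _)
      have h3 : ε * ⟪e, u⟫ ≤ ‖e‖ * ‖u‖ := by
        calc ε * ⟪e, u⟫ ≤ 1 * ⟪e, u⟫ :=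
              mul_le_mul_of_nonneg_right hε1 (he0 u huK)
          _ = ⟪e, u⟫ := one_mul _
          _ ≤ ‖e‖ * ‖u‖ := real_inner_le_norm e u
      rw [hLam]; linarith
    have hbddAbove : BddAbove S := ⟨Lam, fun lam h => hSbdd lam h⟩
    set lam₀ : ℝ := sSup S with hlam₀
    have hlam₀0 : 0 ≤ lam₀ := le_csSup hbddAbove h0S
    have hlam₀Lam : lam₀ ≤ Lam := csSup_le ⟨0, h0S⟩ hSbdd
    -- attainment of the supremum
    obtain ⟨sq, _, hsqtend, hsqmem⟩ := exists_seq_tendsto_sSup ⟨0, h0S⟩ hbddAbove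
    choose xs gs hxsK hxse hgsH hgsK hzsK using hsqmem
    have hxsb : ∀ j, xs j ∈ Metric.closedBall (0 : EuclideanSpace ℝ (Fin n)) v⁻¹ := by
      intro j
      rw [Metric.mem_closedBall, dist_zero_right]
      have h1 := hvle (xs j) (hxsK j)
      rw [hxse j] at h1
      calc ‖xs j‖ = v⁻¹ * (v * ‖xs j‖) := by rw [inv_mul_cancel_left₀ (ne_of_gt hv0)]
        _ ≤ v⁻¹ * 1 := mul_le_mul_of_nonneg_left h1 (by positivity)
        _ = v⁻¹ := mul_one _
    have hgsb : ∀ j, gs j ∈ Metric.closedBall (0 : EuclideanSpace ℝ (Fin n)) M := by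
      intro j
      rw [Metric.mem_closedBall, dist_zero_right]
      exact hMb _ _ (hxsK j) (le_of_eq (hxse j)) (hgsH j) (hgsK j)
    obtain ⟨xstar, _, φ, hφ, hxconv⟩ :=
      (isCompact_closedBall (0 : EuclideanSpace ℝ (Fin n)) v⁻¹).tendsto_subseq hxsb
    obtain ⟨gstar, _, ψ, hψ, hgconv⟩ :=
      (isCompact_closedBall (0 : EuclideanSpace ℝ (Fin n)) M).tendsto_subseq
        (fun j => hgsb (φ j))
    set χ : ℕ → ℕ := φ ∘ ψ with hχ
    have hχmono : StrictMono χ := hφ.comp hψ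
    have hxconv' : Filter.Tendsto (xs ∘ χ) Filter.atTop (nhds xstar) :=
      hxconv.comp hψ.tendsto_atTop
    have hgconv' : Filter.Tendsto (gs ∘ χ) Filter.atTop (nhds gstar) := hgconv
    have hsqconv' : Filter.Tendsto (sq ∘ χ) Filter.atTop (nhds lam₀) :=
      hsqtend.comp hχmono.tendsto_atTop
    have hxstarK : xstar ∈ K := hKlim (xs ∘ χ) xstar (fun j => hxsK (χ j)) hxconv'
    have hxstare : ⟪e, xstar⟫ = 1 := by
      have h1 : Filter.Tendsto (fun j => ⟪e, xs (χ j)⟫) Filter.atTop (nhds ⟪e, xstar⟫) :=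
        (hecont.tendsto xstar).comp hxconv'
      have h2 : Filter.Tendsto (fun j => ⟪e, xs (χ j)⟫) Filter.atTop (nhds 1) := by
        have : (fun j => ⟪e, xs (χ j)⟫) = fun _ => (1:ℝ) := funext fun j => hxse (χ j)
        rw [this]; exact tendsto_const_nhds
      exact tendsto_nhds_unique h1 h2
    have hgstarH : gstar ∈ H xstar :=
      hHlim (xs ∘ χ) (gs ∘ χ) xstar gstar (fun j => hgsH (χ j)) hxconv' hgconv'
    have hgstarK : gstar ∈ K := hKlim (gs ∘ χ) gstar (fun j => hgsK (χ j)) hgconv'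
    set z : EuclideanSpace ℝ (Fin n) := gstar + ε • u - lam₀ • xstar with hz
    have hzKmem : z ∈ K := by
      apply hKlim (fun j => gs (χ j) + ε • u - sq (χ j) • xs (χ j)) z
        (fun j => hzsK (χ j))
      exact (hgconv'.add tendsto_const_nhds).sub (hsqconv'.smul hxconv')
    by_cases hz0 : z = 0
    · refine ⟨xstar, lam₀, hxstarK, hxstare, hlam₀0, hlam₀Lam, ?_, ?_⟩
      · have heq : lam₀ • xstar - ε • u = gstar := by
          rw [hz] at hz0
          have h3 := sub_eq_zero.mp hz0
          rw [← h3]; abel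
        rw [heq]; exact hgstarH
      · have heq : lam₀ • xstar - ε • u = gstar := by
          rw [hz] at hz0
          have h3 := sub_eq_zero.mp hz0
          rw [← h3]; abel
        rw [heq]; exact hgstarK
    · exfalso
      -- push the supremum further: contradiction
      set ystar : EuclideanSpace ℝ (Fin n) := gstar + ε • u with hy
      have hyK : ystar ∈ K := hKadd hgstarK (hKsmul _ (le_of_lt hε) huK)
      have hysplit : ystar = lam₀ • xstar + z := by rw [hz, hy]; abel
      have hezpos : 0 < ⟪e, z⟫ := hepos z hzKmem hz0
      set t : ℝ := ⟪e, ystar⟫ with ht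
      have htval : t = lam₀ + ⟪e, z⟫ := by
        rw [ht, hysplit, inner_add_right, real_inner_smul_right, hxstare, mul_one]
      have htpos : 0 < t := by rw [htval]; linarith
      set x₁ : EuclideanSpace ℝ (Fin n) := t⁻¹ • ystar with hx₁
      have hx₁K : x₁ ∈ K := hKsmul _ (by positivity) hyK
      have hx₁e : ⟪e, x₁⟫ = 1 := by
        rw [hx₁, real_inner_smul_right, ← ht, inv_mul_cancel₀ (ne_of_gt htpos)]
      obtain ⟨w₀, hw₀H, hw₀K⟩ := hweak z hzKmem
      set g₁ : EuclideanSpace ℝ (Fin n) := t⁻¹ • (lam₀ • gstar + w₀) with hg₁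
      have hg₁H : g₁ ∈ H x₁ := by
        have h1 : lam₀ • gstar ∈ H (lam₀ • xstar) := hGsmul lam₀ hlam₀0 hgstarH
        have h2 : lam₀ • gstar + w₀ ∈ H (lam₀ • xstar + z) := hGadd h1 hw₀H
        rw [← hysplit] at h2
        exact hGsmul t⁻¹ (by positivity) h2
      have hg₁K : g₁ ∈ K :=
        hKsmul _ (by positivity) (hKadd (hKsmul _ hlam₀0 hgstarK) hw₀K)
      set c₀ : ℝ := ε * ⟪e, z⟫ * t⁻¹ with hc₀
      have hc₀pos : 0 < c₀ := by
        rw [hc₀]; positivity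
      have hiden : g₁ + ε • u - lam₀ • x₁ = t⁻¹ • w₀ + c₀ • u := by
        have hc : c₀ = ε - lam₀ * ε * t⁻¹ := by
          have htne : lam₀ + ⟪e, z⟫ ≠ 0 := ne_of_gt (by linarith)
          have habs : ∀ A B C : ℝ, B + A ≠ 0 → C * A * (B + A)⁻¹ = C - B * C * (B + A)⁻¹ := by
            intro A B C h
            field_simp
            ring
          rw [hc₀, htval]
          exact habs _ _ _ htne
        rw [hg₁, hx₁, hy, hc]
        module
      obtain ⟨δ, hδpos, hδmem⟩ := huord (-x₁)
        (Submodule.neg_mem _ (Submodule.subset_span hx₁K))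
      have hnew : lam₀ + c₀ * δ ∈ S := by
        refine ⟨x₁, g₁, hx₁K, hx₁e, hg₁H, hg₁K, ?_⟩
        have hiden2 : g₁ + ε • u - (lam₀ + c₀ * δ) • x₁ =
            t⁻¹ • w₀ + c₀ • (u + δ • (-x₁)) := by
          have h1 : g₁ + ε • u - (lam₀ + c₀ * δ) • x₁ =
              (g₁ + ε • u - lam₀ • x₁) - (c₀ * δ) • x₁ := by module
          rw [h1, hiden]
          module
        rw [hiden2]
        exact hKadd (hKsmul _ (by positivity) hw₀K) (hKsmul _ (le_of_lt hc₀pos) hδmem)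
      have hle := le_csSup hbddAbove hnew
      rw [← hlam₀] at hle
      nlinarith [mul_pos hc₀pos hδpos]
  -- pass to the limit ε → 0
  have hεform : ∀ k : ℕ, (0:ℝ) < 1 / ((k:ℝ)+1) ∧ 1 / ((k:ℝ)+1) ≤ 1 := by
    intro k
    constructor
    · positivity
    · rw [div_le_one (by positivity)]
      have : (0:ℝ) ≤ (k:ℝ) := Nat.cast_nonneg k
      linarith
  have hpick2 : ∀ k : ℕ, ∃ x : EuclideanSpace ℝ (Fin n), ∃ lam : ℝ,
      x ∈ K ∧ ⟪e, x⟫ = 1 ∧ 0 ≤ lam ∧ lam ≤ Lam ∧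
      lam • x - (1/((k:ℝ)+1)) • u ∈ H x ∧ lam • x - (1/((k:ℝ)+1)) • u ∈ K :=
    fun k => key _ (hεform k).1 (hεform k).2
  choose xa la hxaK hxae hla0 hlaLam haH haK using hpick2
  have hxab : ∀ k, xa k ∈ Metric.closedBall (0 : EuclideanSpace ℝ (Fin n)) v⁻¹ := by
    intro k
    rw [Metric.mem_closedBall, dist_zero_right]
    have h1 := hvle (xa k) (hxaK k)
    rw [hxae k] at h1
    calc ‖xa k‖ = v⁻¹ * (v * ‖xa k‖) := by rw [inv_mul_cancel_left₀ (ne_of_gt hv0)]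
      _ ≤ v⁻¹ * 1 := mul_le_mul_of_nonneg_left h1 (by positivity)
      _ = v⁻¹ := mul_one _
  have hlab : ∀ k, la k ∈ Set.Icc (0:ℝ) Lam := fun k => ⟨hla0 k, hlaLam k⟩
  obtain ⟨ξ, _, φ, hφ, hξconv⟩ :=
    (isCompact_closedBall (0 : EuclideanSpace ℝ (Fin n)) v⁻¹).tendsto_subseq hxab
  obtain ⟨lam, hlamIcc, ψ, hψ, hlamconv⟩ :=
    (isCompact_Icc (a := (0:ℝ)) (b := Lam)).tendsto_subseq (fun j => hlab (φ j))
  set χ : ℕ → ℕ := φ ∘ ψ with hχ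
  have hχmono : StrictMono χ := hφ.comp hψ
  have hξconv' : Filter.Tendsto (xa ∘ χ) Filter.atTop (nhds ξ) :=
    hξconv.comp hψ.tendsto_atTop
  have hlamconv' : Filter.Tendsto (la ∘ χ) Filter.atTop (nhds lam) := hlamconv
  have hξK : ξ ∈ K := hKlim (xa ∘ χ) ξ (fun j => hxaK (χ j)) hξconv'
  have hξe : ⟪e, ξ⟫ = 1 := by
    have h1 : Filter.Tendsto (fun j => ⟪e, xa (χ j)⟫) Filter.atTop (nhds ⟪e, ξ⟫) :=
      (hecont.tendsto ξ).comp hξconv'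
    have h2 : Filter.Tendsto (fun j => ⟪e, xa (χ j)⟫) Filter.atTop (nhds 1) := by
      have h3 : (fun j => ⟪e, xa (χ j)⟫) = fun _ => (1:ℝ) := funext fun j => hxae (χ j)
      rw [h3]; exact tendsto_const_nhds
    exact tendsto_nhds_unique h1 h2
  have hξ0 : ξ ≠ 0 := by
    intro h
    rw [h, inner_zero_right] at hξe
    norm_num at hξe
  have hεtend : Filter.Tendsto (fun j => (1:ℝ)/((χ j : ℝ)+1)) Filter.atTop (nhds 0) := by
    have h1 : Filter.Tendsto (fun k : ℕ => (1:ℝ)/((k:ℝ)+1)) Filter.atTop (nhds 0) := by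
      exact tendsto_one_div_add_atTop_nhds_zero_nat
    exact h1.comp hχmono.tendsto_atTop
  have hgtend : Filter.Tendsto (fun j => la (χ j) • xa (χ j) - (1/((χ j:ℝ)+1)) • u)
      Filter.atTop (nhds (lam • ξ)) := by
    have h1 : Filter.Tendsto (fun j => la (χ j) • xa (χ j)) Filter.atTop (nhds (lam • ξ)) :=
      hlamconv'.smul hξconv'
    have h2 : Filter.Tendsto (fun j => (1/((χ j:ℝ)+1)) • u) Filter.atTop
        (nhds ((0:ℝ) • u)) := hεtend.smul_const u
    rw [zero_smul] at h2
    simpa using h1.sub h2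
  have hfinal : lam • ξ ∈ H ξ :=
    hHlim (xa ∘ χ) (fun j => la (χ j) • xa (χ j) - (1/((χ j:ℝ)+1)) • u) ξ (lam • ξ)
      (fun j => haH (χ j)) hξconv' hgtend
  exact ⟨ξ, hξK, hξ0, lam, hlamIcc.1, hfinal⟩


end ConvexProcessPaper
end

section
/- Let H : ℝⁿ ⇉ ℝⁿ be a convex process. If ξ is an eigenvector of the negative dual process H⁻ corresponding to a nonnegative eigenvalue, i.e. λξ ∈ H⁻(ξ) for some λ ≥ 0 and ξ ≠ 0, then ξ ∈ (R(H))⁻. -/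
open Pointwise Set RealInnerProductSpace

namespace ConvexProcessPaper

variable {n : ℕ}

/-- eigenvectors of H⁻ with nonnegative eigenvalue lie in (R(H))⁻. -/
theorem eigvec_negDual_mem_reach_polar {n : ℕ} (H : SVMap n) (hH : IsConvexProcess H)
    (ξ : EuclideanSpace ℝ (Fin n)) (lam : ℝ) (hlam : 0 ≤ lam) (hξ : ξ ≠ 0)
    (heig : lam • ξ ∈ negDual H ξ) :
    ξ ∈ negPolar (reach H) := by
  have key : ∀ ℓ : ℕ, ∀ x ∈ (imSet H)^[ℓ] ({0} : Set (EuclideanSpace ℝ (Fin n))),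
      ⟪ξ, x⟫ ≤ 0 := by
    intro ℓ
    induction ℓ with
    | zero =>
      intro x hx
      simp only [Function.iterate_zero, id_eq, Set.mem_singleton_iff] at hx
      simp [hx]
    | succ ℓ ih =>
      intro x hx
      rw [Function.iterate_succ_apply'] at hx
      obtain ⟨z, hz, hxz⟩ := by
        simpa [imSet, Set.mem_iUnion] using hx
      have h1 : ⟪ξ, x⟫ ≤ ⟪lam • ξ, z⟫ := heig z x hxz
      have h2 : ⟪lam • ξ, z⟫ = lam * ⟪ξ, z⟫ := real_inner_smul_left ξ z lam
      have := mul_nonpos_of_nonneg_of_nonpos hlam (ih z hz)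
      linarith
  intro x hx
  obtain ⟨ℓ, hℓ⟩ := Set.mem_iUnion.mp hx
  rw [real_inner_comm]
  exact key ℓ x hℓ

end ConvexProcessPaper
end
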